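/- Let Z_1,…,Z_n be i.i.d. negative binomial random variables with ℙ[Z_1 = r] = (nθ/(2m+nθ))^θ ((2m)/(2m+nθ))^r θ^{(r)}/r! for r ∈ ℕ₀, where θ > 0 and n ≤ m ≤ n³. Then ℙ[Σ_{i=1}^n Z_i = 2m] ≥ C n^{-5/2} for a constant C > 0 depending only on θ. -/

import Mathlib

open Finset Nat

/-- Rising factorial `θ^{(r)}` for real `θ`. -/
noncomputable def riseR (x : ℝ) (k : ℕ) : ℝ := ∏ i ∈ Finset.range k, (x + i)

/-- Mass function of the negative binomial distribution appearing in the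
configuration model: `ℙ[Z = r] = (nθ/(2m+nθ))^θ (2m/(2m+nθ))^r θ^{(r)}/r!`. -/
noncomputable def nbMass (θ : ℝ) (n m : ℕ) (r : ℕ) : ℝ :=
  ((n * θ) / (2 * m + n * θ)) ^ θ * ((2 * m : ℝ) / (2 * m + n * θ)) ^ r *
    riseR θ r / (r ! : ℝ)

lemma riseR_zero (x : ℝ) : riseR x 0 = 1 := by simp [riseR]
lemma riseR_succ (x : ℝ) (k : ℕ) : riseR x (k+1) = riseR x k * (x + k) :=
  Finset.prod_range_succ _ _
lemma riseR_pos {x : ℝ} (hx : 0 < x) (k : ℕ) : 0 < riseR x k :=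
  Finset.prod_pos (fun i _ => by positivity)
lemma riseR_cast (c M : ℕ) : riseR ((c:ℝ)+1) M = (c+M)! / c ! := by
  induction M with
  | zero =>
    have hc : (c ! : ℝ) ≠ 0 := by positivity
    simp [riseR_zero, div_self hc]
  | succ M ih =>
    rw [riseR_succ, ih]
    have hc : (c ! : ℝ) ≠ 0 := by positivity
    rw [div_mul_eq_mul_div, ← Nat.add_assoc, Nat.factorial_succ (c+M)]
    push_cast
    ring

lemma vand (u v : ℝ) (M : ℕ) :
    ∑ j ∈ range (M+1), (M.choose j : ℝ) * (riseR u j * riseR v (M-j)) = riseR (u+v) M := by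
  induction M with
  | zero => simp [riseR_zero]
  | succ M ih =>
    rw [riseR_succ, ← ih, Finset.sum_range_succ']
    have h1 : ∀ j ∈ range (M+1), ((M+1).choose (j+1) : ℝ) * (riseR u (j+1) * riseR v (M+1-(j+1)))
        = (M.choose j : ℝ) * (riseR u j * riseR v (M-j)) * (u+j)
          + (M.choose (j+1) : ℝ) * (riseR u (j+1) * riseR v (M-j)) := by
      intro j hj
      have h2 : M+1-(j+1) = M-j := by omega
      rw [Nat.choose_succ_succ, h2, riseR_succ]
      push_cast
      ring
    rw [Finset.sum_congr rfl h1, Finset.sum_add_distrib]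
    have h3 : ∑ j ∈ range (M+1), (M.choose (j+1) : ℝ) * (riseR u (j+1) * riseR v (M-j))
        + ((M+1).choose 0 : ℝ) * (riseR u 0 * riseR v (M+1-0))
        = ∑ j ∈ range (M+1), (M.choose j : ℝ) * (riseR u j * (riseR v (M-j) * (v + (M-j:ℕ)))) := by
      have h4 : ∑ j ∈ range (M+2), (M.choose j : ℝ) * (riseR u j * riseR v (M+1-j))
          = ∑ j ∈ range (M+1), (M.choose (j+1) : ℝ) * (riseR u (j+1) * riseR v (M-j))
            + ((M+1).choose 0 : ℝ) * (riseR u 0 * riseR v (M+1-0)) := by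
        rw [Finset.sum_range_succ']
        congr 1
        · refine Finset.sum_congr rfl fun j hj => ?_
          have : M+1-(j+1) = M-j := by omega
          rw [this]
        · norm_num
      rw [← h4, Finset.sum_range_succ]
      simp only [Nat.choose_succ_self, Nat.cast_zero, zero_mul, add_zero]
      refine Finset.sum_congr rfl fun j hj => ?_
      have hj' : j ≤ M := by simpa using Nat.lt_succ_iff.mp (Finset.mem_range.mp hj)
      have : M+1-j = (M-j)+1 := by omega
      rw [this, riseR_succ]
    rw [add_assoc, h3, ← Finset.sum_add_distrib, Finset.sum_mul]
    refine Finset.sum_congr rfl fun j hj => ?_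
    have hj' : j ≤ M := Nat.lt_succ_iff.mp (Finset.mem_range.mp hj)
    have : ((M-j : ℕ) : ℝ) = (M:ℝ) - j := by
      rw [Nat.cast_sub hj']
    rw [this]
    push_cast
    ring


lemma vand_div (u v : ℝ) (M : ℕ) :
    ∑ p ∈ Finset.HasAntidiagonal.antidiagonal M, (riseR u p.1 / p.1 ! * (riseR v p.2 / p.2 !))
      = riseR (u+v) M / M ! := by
  rw [Finset.Nat.sum_antidiagonal_eq_sum_range_succ_mk, ← vand u v M, Finset.sum_div]
  refine Finset.sum_congr rfl fun j hj => ?_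
  have hj' : j ≤ M := Nat.lt_succ_iff.mp (Finset.mem_range.mp hj)
  have hch : (M.choose j : ℝ) = M ! / (j ! * (M-j)!) := Nat.cast_choose ℝ hj'
  have h1 : (j ! : ℝ) ≠ 0 := by positivity
  have h2 : ((M-j)! : ℝ) ≠ 0 := by positivity
  have h3 : (M ! : ℝ) ≠ 0 := by positivity
  field_simp [hch]
  rw [hch]; field_simp

lemma sum_finAntidiagonal_succ {d M : ℕ} (F : (Fin (d+1) → ℕ) → ℝ) :
    ∑ z ∈ Finset.finAntidiagonal (d+1) M, F z
      = ∑ p ∈ Finset.HasAntidiagonal.antidiagonal M, ∑ g ∈ Finset.finAntidiagonal d p.2, F (Fin.cons p.1 g) := by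
  rw [← Finset.sum_sigma (Finset.HasAntidiagonal.antidiagonal M) (fun p => Finset.finAntidiagonal d p.2)
    (fun x => F (Fin.cons x.1.1 x.2))]
  refine Finset.sum_nbij' (i := fun z => ⟨(z 0, ∑ i, Fin.tail z i), Fin.tail z⟩)
    (j := fun x => Fin.cons x.1.1 x.2) ?_ ?_ ?_ ?_ ?_
  · intro z hz
    rw [Finset.mem_finAntidiagonal] at hz
    simp only [Finset.mem_sigma, Finset.HasAntidiagonal.mem_antidiagonal, Finset.mem_finAntidiagonal]
    exact ⟨by rw [← hz, Fin.sum_univ_succ]; rfl, trivial⟩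
  · intro x hx
    simp only [Finset.mem_sigma, Finset.HasAntidiagonal.mem_antidiagonal, Finset.mem_finAntidiagonal] at hx ⊢
    rw [Fin.sum_cons, hx.2, hx.1]
  · intro z hz
    exact Fin.cons_self_tail z
  · intro x hx
    simp only [Finset.mem_sigma, Finset.HasAntidiagonal.mem_antidiagonal, Finset.mem_finAntidiagonal] at hx
    obtain ⟨⟨a,b⟩, g⟩ := x
    have hb : (∑ i, g i) = b := hx.2
    simp [Fin.cons_zero, Fin.tail_cons, hb]
  · intro z hz
    rw [Fin.cons_self_tail]

lemma conv (x : ℝ) (d M : ℕ) :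
    ∑ z ∈ Finset.finAntidiagonal d M, ∏ i, (riseR x (z i) / (z i)!)
      = riseR (d * x) M / M ! := by
  induction d generalizing M with
  | zero =>
    cases M with
    | zero =>
      have h : Finset.finAntidiagonal 0 (0:ℕ) = {fun _ => 0} := by
        ext f
        simp only [Finset.mem_finAntidiagonal, Finset.mem_singleton]
        constructor
        · intro _; exact funext fun i => i.elim0
        · intro h; subst h; simp
      rw [h]
      simp [riseR_zero]
    | succ M =>
      have h : Finset.finAntidiagonal 0 (M+1:ℕ) = ∅ := by
        ext f
        simp [Finset.mem_finAntidiagonal]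
      have h0 : riseR 0 (M+1) = 0 :=
        Finset.prod_eq_zero (Finset.mem_range.mpr (Nat.succ_pos M)) (by norm_num)
      rw [h]
      push_cast
      simp [h0]
  | succ d ih =>
    rw [sum_finAntidiagonal_succ]
    have h1 : ∀ p ∈ Finset.HasAntidiagonal.antidiagonal M,
        ∑ g ∈ Finset.finAntidiagonal d p.2, ∏ i, (riseR x ((Fin.cons p.1 g : Fin (d+1) → ℕ) i) / ((Fin.cons p.1 g : Fin (d+1) → ℕ) i)!)
        = riseR x p.1 / p.1 ! * (riseR (d*x) p.2 / p.2 !) := by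
      intro p hp
      rw [← ih p.2, Finset.mul_sum]
      refine Finset.sum_congr rfl fun g hg => ?_
      rw [Fin.prod_univ_succ]
      simp [Fin.cons_zero, Fin.cons_succ]
    rw [Finset.sum_congr rfl h1, vand_div]
    congr 2
    push_cast
    ring


lemma log_ge_one_sub_inv {t : ℝ} (ht : 0 < t) : 1 - t⁻¹ ≤ Real.log t := by
  have h := Real.log_le_sub_one_of_pos (show (0:ℝ) < t⁻¹ by positivity)
  rw [Real.log_inv] at h
  linarith

lemma log_sum_lower (x : ℝ) (hx : 0 < x) (M : ℕ) :
    Real.log (x + M) - Real.log x ≤ ∑ i ∈ range M, (x + i)⁻¹ := by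
  induction M with
  | zero => simp
  | succ M ih =>
    rw [Finset.sum_range_succ]
    have h1 : Real.log (x + (M+1:ℕ)) - Real.log (x + M) ≤ (x + M)⁻¹ := by
      have hxM : (0:ℝ) < x + M := by positivity
      have h := Real.log_le_sub_one_of_pos (show (0:ℝ) < (x + (M+1:ℕ))/(x+M) by positivity)
      rw [Real.log_div (by positivity) (by positivity)] at h
      have : (x + (M+1:ℕ))/(x+M) - 1 = (x+M)⁻¹ := by
        push_cast; field_simp; ring
      linarith
    linarith

lemma log_sum_upper (x : ℝ) (hx : 0 < x) (M : ℕ) :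
    ∑ i ∈ range M, (x + 1 + i)⁻¹ ≤ Real.log (x + M) - Real.log x := by
  induction M with
  | zero => simp
  | succ M ih =>
    rw [Finset.sum_range_succ]
    have hxM : (0:ℝ) < x + M := by positivity
    have h1 : (x + 1 + M)⁻¹ ≤ Real.log (x + (M+1:ℕ)) - Real.log (x + M) := by
      have h := log_ge_one_sub_inv (show (0:ℝ) < (x + (M+1:ℕ))/(x+M) by positivity)
      rw [Real.log_div (by positivity) (by positivity)] at h
      have h2 : 1 - ((x + (M+1:ℕ))/(x+M))⁻¹ = (x + 1 + M)⁻¹ := by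
        push_cast
        rw [inv_div]
        field_simp
        ring
      linarith [h2 ▸ h]
    linarith

lemma riseR_ratio_ge {b a : ℝ} (h0 : 0 < b) (hba : b ≤ a) (M : ℕ) :
    riseR b M * Real.exp ((a - b) * ∑ i ∈ range M, (a + i)⁻¹) ≤ riseR a M := by
  have ha : 0 < a := lt_of_lt_of_le h0 hba
  rw [Finset.mul_sum, Real.exp_sum, riseR, riseR, ← Finset.prod_mul_distrib]
  refine Finset.prod_le_prod (fun i _ => by positivity) (fun i _ => ?_)
  have hai : (0:ℝ) < a + i := by positivity
  set t : ℝ := (a - b) * (a + i)⁻¹ with ht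
  have key : 1 - t ≤ Real.exp (-t) := by
    have := Real.add_one_le_exp (-t)
    linarith
  have h2 : (b + i) ≤ (a + i) * Real.exp (-t) := by
    have h3 : (a + i) * (1 - t) = b + i := by
      rw [ht]
      field_simp
      ring
    calc (b:ℝ) + i = (a + i) * (1 - t) := h3.symm
      _ ≤ (a + i) * Real.exp (-t) := by
          exact mul_le_mul_of_nonneg_left key hai.le
  calc (b + i) * Real.exp t ≤ ((a + i) * Real.exp (-t)) * Real.exp t :=
        mul_le_mul_of_nonneg_right h2 (Real.exp_pos t).le
    _ = a + i := by rw [mul_assoc, ← Real.exp_add]; simp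

lemma prod_add_two (K : ℕ) : ∏ i ∈ range K, ((1:ℝ) + 1 + i) = (K+1)! := by
  induction K with
  | zero => simp
  | succ K ih =>
    rw [Finset.prod_range_succ, ih]
    have : (K+1+1)! = (K+2) * (K+1)! := Nat.factorial_succ (K+1)
    rw [this]
    push_cast
    ring

lemma small_case {a : ℝ} (ha0 : 0 < a) (ha1 : a ≤ 1) {M : ℕ} (hM : 1 ≤ M) :
    a * M ! * Real.exp (-((1-a) * (Real.log (a+M) - Real.log a))) ≤ riseR a M := by
  obtain ⟨K, rfl⟩ : ∃ K, M = K + 1 := ⟨M - 1, by omega⟩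
  have hprod : riseR a (K+1) = (∏ i ∈ range K, (a + 1 + i)) * a := by
    rw [riseR, Finset.prod_range_succ']
    congr 1
    · refine Finset.prod_congr rfl fun i _ => ?_
      push_cast; ring
    · simp
  rw [hprod]
  -- ∏ (a+1+i) ≥ (K+1)! * exp(-(1-a) * ∑ (a+1+i)⁻¹) ≥ (K+1)! * exp(-(1-a)(log(a+K)-log a))
  have h1 : ((K+1)! : ℝ) * Real.exp (-((1-a) * ∑ i ∈ range K, (a + 1 + i)⁻¹))
      ≤ ∏ i ∈ range K, (a + 1 + i) := by
    rw [← prod_add_two, Finset.mul_sum,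
      show -∑ i ∈ range K, (1-a) * (a+1+(i:ℝ))⁻¹ = ∑ i ∈ range K, -((1-a) * (a+1+(i:ℝ))⁻¹) from
        by rw [← Finset.sum_neg_distrib],
      Real.exp_sum, ← Finset.prod_mul_distrib]
    refine Finset.prod_le_prod (fun i _ => by positivity) (fun i _ => ?_)
    have hai : (0:ℝ) < a + 1 + i := by positivity
    set u : ℝ := (1 - a) * (a + 1 + i)⁻¹ with hu
    have key : 1 + u ≤ Real.exp u := by linarith [Real.add_one_le_exp u]
    have h3 : (a + 1 + i) * (1 + u) = 1 + 1 + i := by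
      rw [hu]; field_simp; ring
    calc (1 + 1 + (i:ℝ)) * Real.exp (-u) = (a+1+i) * (1+u) * Real.exp (-u) := by rw [h3]
      _ ≤ (a+1+i) * Real.exp u * Real.exp (-u) := by
          refine mul_le_mul_of_nonneg_right (mul_le_mul_of_nonneg_left key hai.le) (Real.exp_pos _).le
      _ = a + 1 + i := by rw [mul_assoc, ← Real.exp_add]; simp
  have h2 : ∑ i ∈ range K, (a + 1 + i)⁻¹ ≤ Real.log (a + (K+1:ℕ)) - Real.log a := by
    have hu := log_sum_upper a ha0 K
    have hmono : Real.log (a + K) ≤ Real.log (a + (K+1:ℕ)) := by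
      apply Real.log_le_log (by positivity)
      push_cast; linarith
    linarith
  have h4 : Real.exp (-((1-a) * (Real.log (a+(K+1:ℕ)) - Real.log a)))
      ≤ Real.exp (-((1-a) * ∑ i ∈ range K, (a + 1 + i)⁻¹)) := by
    apply Real.exp_le_exp.mpr
    have h1a : (0:ℝ) ≤ 1 - a := by linarith
    nlinarith [mul_le_mul_of_nonneg_left h2 h1a]
  calc a * ((K+1)! : ℝ) * Real.exp (-((1-a) * (Real.log (a+(K+1:ℕ)) - Real.log a)))
      ≤ a * ((K+1)! : ℝ) * Real.exp (-((1-a) * ∑ i ∈ range K, (a + 1 + i)⁻¹)) := by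
        refine mul_le_mul_of_nonneg_left h4 (by positivity)
    _ = ((K+1)! : ℝ) * Real.exp (-((1-a) * ∑ i ∈ range K, (a + 1 + i)⁻¹)) * a := by ring
    _ ≤ (∏ i ∈ range K, (a + 1 + i)) * a := mul_le_mul_of_nonneg_right h1 ha0.le


lemma stirlingSeq_ge (n : ℕ) : Real.sqrt Real.pi ≤ Stirling.stirlingSeq (n+1) := by
  have h := Stirling.tendsto_stirlingSeq_sqrt_pi
  have h2 : Filter.Tendsto (Stirling.stirlingSeq ∘ Nat.succ) Filter.atTop
      (nhds (Real.sqrt Real.pi)) := h.comp (Filter.tendsto_add_atTop_nat 1)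
  exact Stirling.stirlingSeq'_antitone.le_of_tendsto h2 n

lemma stirlingSeq_le (n : ℕ) : Stirling.stirlingSeq (n+1) ≤ Real.exp 1 / Real.sqrt 2 := by
  have h := Stirling.stirlingSeq'_antitone (Nat.zero_le n)
  simpa [Stirling.stirlingSeq_one] using h

lemma stirling_lower {n : ℕ} (hn : 1 ≤ n) :
    Real.sqrt (2 * Real.pi * n) * (n / Real.exp 1)^n ≤ (n ! : ℝ) := by
  obtain ⟨k, rfl⟩ : ∃ k, n = k + 1 := ⟨n - 1, by omega⟩
  have h := stirlingSeq_ge k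
  rw [Stirling.stirlingSeq, le_div_iff₀ (by positivity)] at h
  calc Real.sqrt (2 * Real.pi * (k+1:ℕ)) * ((k+1:ℕ) / Real.exp 1)^(k+1)
      = Real.sqrt Real.pi * (Real.sqrt (2 * (k+1:ℕ)) * ((k+1:ℕ) / Real.exp 1)^(k+1)) := by
        rw [show (2*Real.pi*((k+1:ℕ):ℝ)) = Real.pi * (2*((k+1:ℕ):ℝ)) by ring,
          Real.sqrt_mul Real.pi_nonneg, mul_assoc]
    _ ≤ (k+1)! := h

lemma stirling_upper {n : ℕ} (hn : 1 ≤ n) :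
    (n ! : ℝ) ≤ Real.exp 1 * Real.sqrt n * (n / Real.exp 1)^n := by
  obtain ⟨k, rfl⟩ : ∃ k, n = k + 1 := ⟨n - 1, by omega⟩
  have h := stirlingSeq_le k
  rw [Stirling.stirlingSeq, div_le_div_iff₀ (by positivity) (by positivity)] at h
  have h2 : Real.sqrt (2 * (k+1:ℕ)) = Real.sqrt 2 * Real.sqrt (k+1:ℕ) :=
    Real.sqrt_mul (by positivity) _
  have h3 : (0:ℝ) < Real.sqrt 2 := by positivity
  calc ((k+1)! : ℝ) = ((k+1)! : ℝ) * Real.sqrt 2 / Real.sqrt 2 := by field_simp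
    _ ≤ Real.exp 1 * (Real.sqrt (2*(k+1:ℕ)) * ((k+1:ℕ)/Real.exp 1)^(k+1)) / Real.sqrt 2 := by
        have : ((k+1)! : ℝ) * Real.sqrt 2 ≤ Real.exp 1 * (Real.sqrt (2*(k+1:ℕ)) * ((k+1:ℕ)/Real.exp 1)^(k+1)) := by linarith
        gcongr
    _ = Real.exp 1 * Real.sqrt (k+1:ℕ) * ((k+1:ℕ)/Real.exp 1)^(k+1) := by
        rw [h2]; field_simp


lemma stepC {b M : ℕ} (hb : 1 ≤ b) (hM : 1 ≤ M) :
    Real.sqrt (2*Real.pi) / Real.exp 2 * (Real.sqrt b / (Real.sqrt M * Real.sqrt (b+M)))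
      ≤ (b:ℝ)^b * (M:ℝ)^M / ((b:ℝ)+(M:ℝ))^(b+M) * (riseR b M / M !) := by
  obtain ⟨c, rfl⟩ : ∃ c, b = c + 1 := ⟨b - 1, by omega⟩
  set b : ℕ := c + 1 with hbdef
  set N : ℕ := b + M with hN
  have hN1 : 1 ≤ N := by omega
  set e : ℝ := Real.exp 1 with he
  have he0 : 0 < e := Real.exp_pos 1
  have hb0 : (0:ℝ) < b := by positivity
  have hM0 : (0:ℝ) < M := by exact_mod_cast Nat.pos_of_ne_zero (by omega)
  have hN0 : (0:ℝ) < N := by positivity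
  have hrise : riseR (b:ℝ) M = ((c+M)! : ℝ) / (c ! : ℝ) := by
    have : ((b:ℕ):ℝ) = (c:ℝ)+1 := by exact_mod_cast hbdef
    rw [this, riseR_cast]
  have hfac1 : (N ! : ℝ) = (N:ℝ) * ((c+M)! : ℝ) := by
    have : N = (c+M) + 1 := by omega
    rw [this]
    push_cast [Nat.factorial_succ]
    ring
  have hfac2 : (b ! : ℝ) = (b:ℝ) * (c ! : ℝ) := by
    rw [hbdef]; exact_mod_cast Nat.factorial_succ c
  have h1 := stirling_lower hN1
  have h2 := stirling_upper (show 1 ≤ b by omega)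
  have h3 := stirling_upper hM
  set L : ℝ := Real.sqrt (2*Real.pi*N) * ((N:ℝ)/e)^N with hL
  set Ub : ℝ := e * Real.sqrt b * ((b:ℝ)/e)^b with hUb
  set Um : ℝ := e * Real.sqrt M * ((M:ℝ)/e)^M with hUm
  have hL0 : 0 < L := by rw [hL]; positivity
  have hUb0 : 0 < Ub := by rw [hUb]; positivity
  have hUm0 : 0 < Um := by rw [hUm]; positivity
  have hbM : (b:ℝ) + (M:ℝ) = (N:ℝ) := by rw [hN]; push_cast; ring
  have hsN : Real.sqrt (2*Real.pi*N) = Real.sqrt (2*Real.pi) * Real.sqrt N := by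
    rw [Real.sqrt_mul (by positivity)]
  have hsb : Real.sqrt b * Real.sqrt b = (b:ℝ) := Real.mul_self_sqrt hb0.le
  have hexp2 : Real.exp 2 = e * e := by
    rw [he, ← Real.exp_add]; norm_num
  have hsM0 : 0 < Real.sqrt M := Real.sqrt_pos.mpr hM0
  have hsN0 : 0 < Real.sqrt N := Real.sqrt_pos.mpr hN0
  have hsb0 : 0 < Real.sqrt b := Real.sqrt_pos.mpr hb0
  -- key algebraic identity
  have hK : Real.sqrt (2*Real.pi) / Real.exp 2 * (Real.sqrt b / (Real.sqrt M * Real.sqrt N))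
      = (b:ℝ)^b * (M:ℝ)^M / ((N:ℝ))^N * ((b:ℝ) * L / ((N:ℝ) * (Ub * Um))) := by
    rw [hL, hUb, hUm, hsN, hexp2, div_pow, div_pow, div_pow]
    have hee : e^b * e^M = e^N := by rw [← pow_add]
    field_simp
    rw [← hee]
    ring_nf
    rw [Real.sq_sqrt hb0.le, Real.sq_sqrt hN0.le]
    ring
  have hmono : (b:ℝ) * L / ((N:ℝ) * (Ub * Um)) ≤ (b:ℝ) * (N ! : ℝ) / ((N:ℝ) * ((b ! : ℝ) * (M ! : ℝ))) := by
    apply div_le_div₀ (by positivity) ?_ (by positivity) ?_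
    · exact mul_le_mul_of_nonneg_left h1 hb0.le
    · have : (b ! : ℝ) * (M ! : ℝ) ≤ Ub * Um :=
        mul_le_mul h2 h3 (by positivity) hUb0.le
      exact mul_le_mul_of_nonneg_left this hN0.le
  have hfinal : (b:ℝ)^b * (M:ℝ)^M / ((N:ℝ))^N * ((b:ℝ) * (N ! : ℝ) / ((N:ℝ) * ((b ! : ℝ) * (M ! : ℝ))))
      = (b:ℝ)^b * (M:ℝ)^M / ((b:ℝ)+(M:ℝ))^(b+M) * (riseR b M / M !) := by
    rw [hbM, hrise, hfac1, hfac2]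
    have hc0 : (0:ℝ) < (c ! : ℝ) := by positivity
    have hm0 : (0:ℝ) < (M ! : ℝ) := by positivity
    field_simp
    ring
  rw [hbM] at hfinal ⊢
  rw [hK, ← hfinal]
  exact mul_le_mul_of_nonneg_left hmono (by positivity)


theorem analytic (θ a : ℝ) (hθ : 0 < θ) (hθa : θ ≤ a) (M : ℕ) (hM : 1 ≤ M) :
    ∃ b : ℕ, 1 ≤ b ∧ a/2 ≤ (b:ℝ) ∧ (b:ℝ) ≤ max 1 a ∧
    min 1 (θ^2) * Real.exp (-(1:ℝ)) *
        (Real.exp ((b:ℝ) * (Real.log b - Real.log ((b:ℝ)+M)) + (M:ℝ) * (Real.log M - Real.log ((b:ℝ)+M)))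
          * riseR b M / M !)
      ≤ Real.exp (a * (Real.log a - Real.log (a+M)) + (M:ℝ) * (Real.log M - Real.log (a+M)))
          * riseR a M / M ! := by
  have ha : 0 < a := lt_of_lt_of_le hθ hθa
  have hM0 : (0:ℝ) < M := by exact_mod_cast Nat.pos_of_ne_zero (by omega)
  refine ⟨max 1 ⌊a⌋₊, le_max_left _ _, ?_, ?_, ?_⟩
  · -- a/2 ≤ b
    rcases le_or_gt a 2 with h | h
    · have : (1:ℝ) ≤ (max 1 ⌊a⌋₊ : ℕ) := by
        exact_mod_cast le_max_left 1 ⌊a⌋₊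
      linarith
    · have h1 : a - 1 < (⌊a⌋₊ : ℝ) := Nat.sub_one_lt_floor a
      have h2 : (⌊a⌋₊ : ℝ) ≤ ((max 1 ⌊a⌋₊ : ℕ) : ℝ) := by
        exact_mod_cast le_max_right 1 ⌊a⌋₊
      linarith
  · -- b ≤ max 1 a
    have h1 : (⌊a⌋₊ : ℝ) ≤ a := Nat.floor_le ha.le
    have : ((max 1 ⌊a⌋₊ : ℕ) : ℝ) = max 1 (⌊a⌋₊ : ℝ) := by
      push_cast; rfl
    rw [this]
    exact max_le_max le_rfl h1
  · set b : ℕ := max 1 ⌊a⌋₊ with hbdef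
    have hb1 : 1 ≤ b := le_max_left _ _
    have hb0 : (0:ℝ) < b := by exact_mod_cast hb1
    have hbM0 : (0:ℝ) < (b:ℝ) + M := by positivity
    have haM0 : (0:ℝ) < a + M := by positivity
    have hab1 : a ≤ (b:ℝ) + 1 := by
      have h1 := Nat.lt_floor_add_one a
      have h2 : (⌊a⌋₊ : ℝ) ≤ (b:ℝ) := by exact_mod_cast le_max_right 1 ⌊a⌋₊
      linarith
    -- Part A
    have partA : min 1 (θ^2) * (Real.exp ((b:ℝ) * (Real.log b - Real.log ((b:ℝ)+M))) * riseR b M)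
        ≤ Real.exp (a * (Real.log a - Real.log (a+M))) * riseR a M := by
      rcases le_or_gt 1 a with h1a | h1a
      · -- integer part case : b = ⌊a⌋₊ ≤ a
        have hbfl : (b:ℝ) ≤ a := by
          have : b = ⌊a⌋₊ := max_eq_right (Nat.le_floor (by exact_mod_cast h1a))
          rw [this]
          exact Nat.floor_le ha.le
        have hS : Real.log (a+M) - Real.log a ≤ ∑ i ∈ range M, (a + (i:ℝ))⁻¹ :=
          log_sum_lower a ha M
        have r1 := riseR_ratio_ge hb0 hbfl M
        have r2 : riseR b M * Real.exp ((a - b) * (Real.log (a+M) - Real.log a)) ≤ riseR a M := by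
          refine le_trans ?_ r1
          have := mul_le_mul_of_nonneg_left hS (show (0:ℝ) ≤ a - b by linarith)
          exact mul_le_mul_of_nonneg_left (Real.exp_le_exp.mpr this) (riseR_pos hb0 M).le
        have key : Real.exp (a * (Real.log a - Real.log (a+M))) * (riseR b M
              * Real.exp ((a - b) * (Real.log (a+M) - Real.log a)))
            = Real.exp ((b:ℝ) * (Real.log a - Real.log (a+M))) * riseR b M := by
          rw [← mul_assoc, mul_comm _ (riseR b M), mul_assoc, ← Real.exp_add]
          ring_nf
        have hlog : (b:ℝ) * (Real.log b - Real.log ((b:ℝ)+M))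
            ≤ (b:ℝ) * (Real.log a - Real.log (a+M)) := by
          refine mul_le_mul_of_nonneg_left ?_ hb0.le
          have hmul : (b:ℝ) * (a+M) ≤ a * ((b:ℝ)+M) := by nlinarith
          have h3 := Real.log_le_log (by positivity) hmul
          rw [Real.log_mul (ne_of_gt hb0) (ne_of_gt haM0),
            Real.log_mul (ne_of_gt ha) (ne_of_gt hbM0)] at h3
          linarith
        calc min 1 (θ^2) * (Real.exp ((b:ℝ) * (Real.log b - Real.log ((b:ℝ)+M))) * riseR b M)
            ≤ 1 * (Real.exp ((b:ℝ) * (Real.log b - Real.log ((b:ℝ)+M))) * riseR b M) := by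
              exact mul_le_mul_of_nonneg_right (min_le_left _ _)
                (mul_nonneg (Real.exp_pos _).le (riseR_pos hb0 M).le)
          _ = Real.exp ((b:ℝ) * (Real.log b - Real.log ((b:ℝ)+M))) * riseR b M := one_mul _
          _ ≤ Real.exp ((b:ℝ) * (Real.log a - Real.log (a+M))) * riseR b M :=
              mul_le_mul_of_nonneg_right (Real.exp_le_exp.mpr hlog) (riseR_pos hb0 M).le
          _ = Real.exp (a * (Real.log a - Real.log (a+M))) * (riseR b M
              * Real.exp ((a - b) * (Real.log (a+M) - Real.log a))) := key.symm
          _ ≤ Real.exp (a * (Real.log a - Real.log (a+M))) * riseR a M :=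
              mul_le_mul_of_nonneg_left r2 (Real.exp_pos _).le
      · -- a < 1, b = 1
        have hbone : b = 1 := by
          have : ⌊a⌋₊ = 0 := Nat.floor_eq_zero.mpr h1a
          rw [hbdef, this]
          simp
        have ha1 : a ≤ 1 := h1a.le
        have hsmall := small_case ha ha1 hM
        have hchain : a^2 * (M ! : ℝ) / (a + M)
            ≤ Real.exp (a * (Real.log a - Real.log (a+M))) * riseR a M := by
          have hstep : Real.exp (a * (Real.log a - Real.log (a+M)))
              * (a * M ! * Real.exp (-((1-a) * (Real.log (a+M) - Real.log a))))
              = a^2 * (M ! : ℝ) / (a + M) := by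
            rw [mul_comm _ (a * (M !:ℝ) * _), mul_assoc (a * (M !:ℝ)), ← Real.exp_add]
            have : -((1-a) * (Real.log (a+M) - Real.log a)) + a * (Real.log a - Real.log (a+M))
                = Real.log a - Real.log (a+M) := by ring
            rw [this, Real.exp_sub, Real.exp_log ha, Real.exp_log haM0]
            ring
          calc a^2 * (M ! : ℝ) / (a + M)
              = Real.exp (a * (Real.log a - Real.log (a+M)))
                * (a * M ! * Real.exp (-((1-a) * (Real.log (a+M) - Real.log a)))) := hstep.symm
            _ ≤ Real.exp (a * (Real.log a - Real.log (a+M))) * riseR a M :=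
                mul_le_mul_of_nonneg_left hsmall (Real.exp_pos _).le
        refine le_trans ?_ hchain
        -- min 1 θ² * (exp(1*(log1 - log(1+M))) * M!) ≤ a² M!/(a+M)
        have hr1 : riseR (b:ℝ) M = (M ! : ℝ) := by
          rw [hbone]
          have := riseR_cast 0 M
          norm_num at this
          exact_mod_cast this
        have hexp1 : Real.exp ((b:ℝ) * (Real.log b - Real.log ((b:ℝ)+M))) = ((1:ℝ)+M)⁻¹ := by
          rw [hbone]
          push_cast
          rw [Real.log_one]
          rw [show (1:ℝ) * (0 - Real.log (1+M)) = -Real.log (1+M) by ring]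
          rw [Real.exp_neg, Real.exp_log (by positivity)]
        rw [hr1, hexp1]
        have hmin : min 1 (θ^2) ≤ a^2 := by
          refine le_trans (min_le_right _ _) ?_
          nlinarith
        have hinv : ((1:ℝ)+M)⁻¹ ≤ (a+M)⁻¹ := by
          apply inv_anti₀ haM0
          linarith
        calc min 1 (θ^2) * (((1:ℝ)+M)⁻¹ * M !)
            ≤ a^2 * ((a+M)⁻¹ * M !) := by
              refine mul_le_mul hmin ?_ (by positivity) (by positivity)
              exact mul_le_mul_of_nonneg_right hinv (by positivity)
          _ = a^2 * (M ! : ℝ) / (a + M) := by ring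
    -- Part B
    have partB : Real.exp (-(1:ℝ)) * Real.exp ((M:ℝ) * (Real.log M - Real.log ((b:ℝ)+M)))
        ≤ Real.exp ((M:ℝ) * (Real.log M - Real.log (a+M))) := by
      rw [← Real.exp_add, Real.exp_le_exp]
      have hMD : (M:ℝ) * (Real.log (a+M) - Real.log ((b:ℝ)+M)) ≤ 1 := by
        rcases le_or_gt (b:ℝ) a with hba | hba
        · have hD : Real.log (a+M) - Real.log ((b:ℝ)+M) ≤ (a - b)/((b:ℝ)+M) := by
            have h2 := Real.log_le_sub_one_of_pos (show (0:ℝ) < (a+M)/((b:ℝ)+M) by positivity)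
            rw [Real.log_div (ne_of_gt haM0) (ne_of_gt hbM0)] at h2
            have h3 : (a+M)/((b:ℝ)+M) - 1 = (a-b)/((b:ℝ)+M) := by field_simp; ring
            linarith
          have h4 : (M:ℝ)*(a-b) ≤ (b:ℝ)+M := by nlinarith
          calc (M:ℝ) * (Real.log (a+M) - Real.log ((b:ℝ)+M))
              ≤ (M:ℝ) * ((a - b)/((b:ℝ)+M)) := mul_le_mul_of_nonneg_left hD hM0.le
            _ = ((M:ℝ)*(a-b))/((b:ℝ)+M) := by ring
            _ ≤ 1 := (div_le_one hbM0).mpr h4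
        · have hD : Real.log (a+M) - Real.log ((b:ℝ)+M) ≤ 0 := by
            have := Real.log_le_log haM0 (show a + (M:ℝ) ≤ (b:ℝ)+M by linarith)
            linarith
          calc (M:ℝ) * (Real.log (a+M) - Real.log ((b:ℝ)+M)) ≤ 0 :=
                mul_nonpos_of_nonneg_of_nonpos hM0.le hD
            _ ≤ 1 := by norm_num
      nlinarith
    -- assemble
    set bA : ℝ := (b:ℝ) * (Real.log b - Real.log ((b:ℝ)+M)) with hbA
    set bB : ℝ := (M:ℝ) * (Real.log M - Real.log ((b:ℝ)+M)) with hbB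
    set aA : ℝ := a * (Real.log a - Real.log (a+M)) with haA
    set aB : ℝ := (M:ℝ) * (Real.log M - Real.log (a+M)) with haB
    have hnum := mul_le_mul partA partB (by positivity)
      (mul_nonneg (Real.exp_pos _).le (riseR_pos ha M).le)
    calc min 1 (θ^2) * Real.exp (-(1:ℝ)) * (Real.exp (bA + bB) * riseR b M / M !)
        = (min 1 (θ^2) * (Real.exp bA * riseR b M)) * (Real.exp (-(1:ℝ)) * Real.exp bB) / M ! := by
          rw [Real.exp_add]; ring
      _ ≤ (Real.exp aA * riseR a M) * Real.exp aB / M ! := by gcongr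
      _ = Real.exp (aA + aB) * riseR a M / M ! := by rw [Real.exp_add]; ring


lemma exp_form (b M : ℕ) (hb0 : (0:ℝ) < b) (hM0 : (0:ℝ) < M) :
    Real.exp ((b:ℝ) * (Real.log b - Real.log ((b:ℝ)+M)) + (M:ℝ) * (Real.log M - Real.log ((b:ℝ)+M)))
      = (b:ℝ)^b * (M:ℝ)^M / ((b:ℝ)+(M:ℝ))^(b+M) := by
  have hbM0 : (0:ℝ) < (b:ℝ)+M := by positivity
  rw [Real.exp_add]
  have e1 : Real.exp ((b:ℝ) * (Real.log b - Real.log ((b:ℝ)+M))) = ((b:ℝ)/((b:ℝ)+M))^b := by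
    rw [Real.exp_nat_mul, Real.exp_sub, Real.exp_log hb0, Real.exp_log hbM0]
  have e2 : Real.exp ((M:ℝ) * (Real.log M - Real.log ((b:ℝ)+M))) = ((M:ℝ)/((b:ℝ)+M))^M := by
    rw [Real.exp_nat_mul, Real.exp_sub, Real.exp_log hM0, Real.exp_log hbM0]
  rw [e1, e2, div_pow, div_pow, pow_add]
  ring

lemma tsum_eq_closed (θ : ℝ) (hθ : 0 < θ) (n m : ℕ) (hn : 1 ≤ n) :
    ∑' z : Fin n → ℕ, (if ∑ i, z i = 2 * m then ∏ i, nbMass θ n m (z i) else 0)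
      = (((n:ℝ) * θ / (2 * m + n * θ)) ^ θ)^n * ((2 * (m:ℝ)) / (2 * m + n * θ))^(2*m)
        * (riseR ((n:ℝ) * θ) (2*m) / (2*m)!) := by
  have h0 : ∀ z : Fin n → ℕ, z ∉ Finset.finAntidiagonal n (2*m) →
      (if ∑ i, z i = 2 * m then ∏ i, nbMass θ n m (z i) else 0) = 0 := by
    intro z hz
    rw [Finset.mem_finAntidiagonal] at hz
    exact if_neg hz
  rw [tsum_eq_sum h0]
  have h1 : ∀ z ∈ Finset.finAntidiagonal n (2*m),
      (if ∑ i, z i = 2 * m then ∏ i, nbMass θ n m (z i) else 0)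
        = (((n:ℝ) * θ / (2 * m + n * θ)) ^ θ)^n * ((2 * (m:ℝ)) / (2 * m + n * θ))^(2*m)
          * ∏ i, (riseR θ (z i) / (z i)!) := by
    intro z hz
    rw [Finset.mem_finAntidiagonal] at hz
    rw [if_pos hz]
    have hterm : ∀ i : Fin n, nbMass θ n m (z i)
        = ((n:ℝ) * θ / (2 * m + n * θ)) ^ θ * (((2 * (m:ℝ)) / (2 * m + n * θ))^(z i)
          * (riseR θ (z i) / (z i)!)) := by
      intro i
      rw [nbMass]
      ring
    rw [Finset.prod_congr rfl (fun i _ => hterm i), Finset.prod_mul_distrib,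
      Finset.prod_mul_distrib, Finset.prod_const, Finset.prod_pow_eq_pow_sum, hz]
    simp only [Finset.card_univ, Fintype.card_fin]
    ring
  rw [Finset.sum_congr rfl h1, ← Finset.mul_sum, conv θ n (2*m)]

set_option maxHeartbeats 2000000 in
theorem stmt_11 (θ : ℝ) (hθ : 0 < θ) :
    ∃ C > (0 : ℝ), ∀ n m : ℕ, 1 ≤ n → n ≤ m → m ≤ n ^ 3 →
      C * (n : ℝ) ^ (-(5 : ℝ) / 2) ≤
        ∑' z : Fin n → ℕ, (if ∑ i, z i = 2 * m then ∏ i, nbMass θ n m (z i) else 0) := by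
  have hs1 : (0:ℝ) < Real.sqrt (θ/2) := Real.sqrt_pos.mpr (by linarith)
  have hs2 : (0:ℝ) < Real.sqrt 2 := by positivity
  have hs3 : (0:ℝ) < Real.sqrt (3+θ) := Real.sqrt_pos.mpr (by linarith)
  have hs4 : (0:ℝ) < Real.sqrt (2*Real.pi) := Real.sqrt_pos.mpr (by positivity)
  have hmin : (0:ℝ) < min 1 (θ^2) := lt_min one_pos (by positivity)
  refine ⟨min 1 (θ^2) * Real.exp (-(1:ℝ)) * (Real.sqrt (2*Real.pi)/Real.exp 2)
    * (Real.sqrt (θ/2) / (Real.sqrt 2 * Real.sqrt (3+θ))), by positivity, ?_⟩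
  intro n m hn hnm hmn3
  set M : ℕ := 2*m with hMdef
  have hm1 : 1 ≤ m := le_trans hn hnm
  have hM : 1 ≤ M := by omega
  set a : ℝ := (n:ℝ) * θ with hadef
  have hn1 : (1:ℝ) ≤ n := by exact_mod_cast hn
  have ha : 0 < a := by positivity
  have hθa : θ ≤ a := by nlinarith
  have hM0 : (0:ℝ) < M := by
    have : 0 < M := by omega
    exact_mod_cast this
  have haM0 : (0:ℝ) < a + M := by positivity
  obtain ⟨b, hb1, hbhalf, hble, hcomp⟩ := analytic θ a hθ hθa M hM
  have hb0 : (0:ℝ) < b := by exact_mod_cast hb1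
  have hbM0 : (0:ℝ) < (b:ℝ) + M := by positivity
  have hC := stepC hb1 hM
  -- rewrite tsum in closed form
  rw [tsum_eq_closed θ hθ n m hn]
  -- identify closed form with the exponential form
  have hden : 2 * (m:ℝ) + (n:ℝ) * θ = a + M := by
    rw [hadef, hMdef]; push_cast; ring
  have hA : (((n:ℝ) * θ / (2 * m + n * θ)) ^ θ)^n = Real.exp (a * (Real.log a - Real.log (a+M))) := by
    have hApos : (0:ℝ) < a / (a+M) := by positivity
    rw [show (n:ℝ) * θ / (2 * (m:ℝ) + n * θ) = a / (a+M) by rw [← hden, hadef]]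
    rw [Real.rpow_def_of_pos hApos, ← Real.exp_nat_mul,
      Real.log_div (ne_of_gt ha) (ne_of_gt haM0)]
    congr 1
    rw [hadef]
    ring
  have hq : ((2 * (m:ℝ)) / (2 * m + n * θ))^(2*m)
      = Real.exp ((M:ℝ) * (Real.log M - Real.log (a+M))) := by
    have hqpos : (0:ℝ) < (M:ℝ) / (a+M) := by positivity
    have hMcast : 2 * (m:ℝ) = (M:ℝ) := by rw [hMdef]; push_cast; ring
    rw [hden, hMcast, Real.exp_nat_mul, Real.exp_sub, Real.exp_log hM0, Real.exp_log haM0, hMdef]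
  rw [hA, hq, ← Real.exp_add]
  -- chain of inequalities
  have hchain1 : min 1 (θ^2) * Real.exp (-(1:ℝ)) *
      (Real.sqrt (2*Real.pi) / Real.exp 2 * (Real.sqrt b / (Real.sqrt M * Real.sqrt ((b:ℝ)+M))))
      ≤ Real.exp (a * (Real.log a - Real.log (a+M)) + (M:ℝ) * (Real.log M - Real.log (a+M)))
        * (riseR a M / M !) := by
    refine le_trans ?_ (hcomp.trans_eq (mul_div_assoc _ _ _))
    have h2 : Real.sqrt (2*Real.pi) / Real.exp 2 * (Real.sqrt b / (Real.sqrt M * Real.sqrt ((b:ℝ)+M)))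
        ≤ Real.exp ((b:ℝ) * (Real.log b - Real.log ((b:ℝ)+M)) + (M:ℝ) * (Real.log M - Real.log ((b:ℝ)+M)))
          * riseR b M / M ! := by
      rw [exp_form b M hb0 hM0]
      calc Real.sqrt (2*Real.pi) / Real.exp 2 * (Real.sqrt b / (Real.sqrt M * Real.sqrt ((b:ℝ)+(M:ℝ))))
          ≤ (b:ℝ)^b * (M:ℝ)^M / ((b:ℝ)+(M:ℝ))^(b+M) * (riseR b M / M !) := hC
        _ = (b:ℝ)^b * (M:ℝ)^M / ((b:ℝ)+(M:ℝ))^(b+M) * riseR b M / M ! := by ring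
    exact mul_le_mul_of_nonneg_left h2 (by positivity)
  refine le_trans ?_ hchain1
  -- final numeric bound
  have hfinal : Real.sqrt (θ/2) / (Real.sqrt 2 * Real.sqrt (3+θ)) * (n:ℝ) ^ (-(5:ℝ)/2)
      ≤ Real.sqrt b / (Real.sqrt M * Real.sqrt ((b:ℝ)+M)) := by
    have hn0 : (0:ℝ) < n := by linarith
    have hn3 : (0:ℝ) < (n:ℝ)^3 := by positivity
    have hrpow : (n:ℝ) ^ (-(5:ℝ)/2) = Real.sqrt n / (n:ℝ)^3 := by
      rw [show -(5:ℝ)/2 = 1/2 + (-3 : ℝ) by norm_num, Real.rpow_add hn0,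
        ← Real.sqrt_eq_rpow, Real.rpow_neg hn0.le]
      rw [show ((3:ℝ)) = ((3:ℕ):ℝ) by norm_num, Real.rpow_natCast]
      ring
    have hbge : Real.sqrt (θ/2) * Real.sqrt n ≤ Real.sqrt b := by
      rw [← Real.sqrt_mul (by positivity)]
      apply Real.sqrt_le_sqrt
      rw [hadef] at hbhalf
      linarith
    have hMle : (M:ℝ) ≤ 2 * (n:ℝ)^3 := by
      have : (m:ℝ) ≤ (n:ℝ)^3 := by exact_mod_cast hmn3
      rw [hMdef]; push_cast; linarith
    have hNle : (b:ℝ) + M ≤ (3+θ) * (n:ℝ)^3 := by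
      have h1 : (b:ℝ) ≤ max 1 a := hble
      have h2 : max 1 a ≤ (1+θ) * (n:ℝ)^3 := by
        have h3 : (1:ℝ) ≤ (n:ℝ)^3 := one_le_pow₀ hn1
        have h4 : (n:ℝ) ≤ (n:ℝ)^3 := le_self_pow₀ hn1 (by norm_num)
        have h5 : (n:ℝ)*θ ≤ (n:ℝ)^3*θ := mul_le_mul_of_nonneg_right h4 hθ.le
        have h6 : (0:ℝ) ≤ θ*(n:ℝ)^3 := mul_nonneg hθ.le (by positivity)
        refine max_le (by linarith) ?_
        rw [hadef]
        linarith
      linarith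
    have hsM : Real.sqrt M ≤ Real.sqrt 2 * Real.sqrt ((n:ℝ)^3) := by
      rw [← Real.sqrt_mul (by norm_num)]
      exact Real.sqrt_le_sqrt hMle
    have hsN : Real.sqrt ((b:ℝ)+M) ≤ Real.sqrt (3+θ) * Real.sqrt ((n:ℝ)^3) := by
      rw [← Real.sqrt_mul (by linarith)]
      exact Real.sqrt_le_sqrt hNle
    have hprod : Real.sqrt M * Real.sqrt ((b:ℝ)+M)
        ≤ Real.sqrt 2 * Real.sqrt (3+θ) * (n:ℝ)^3 := by
      calc Real.sqrt M * Real.sqrt ((b:ℝ)+M)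
          ≤ (Real.sqrt 2 * Real.sqrt ((n:ℝ)^3)) * (Real.sqrt (3+θ) * Real.sqrt ((n:ℝ)^3)) :=
            mul_le_mul hsM hsN (Real.sqrt_nonneg _) (by positivity)
        _ = Real.sqrt 2 * Real.sqrt (3+θ) * (Real.sqrt ((n:ℝ)^3) * Real.sqrt ((n:ℝ)^3)) := by ring
        _ = Real.sqrt 2 * Real.sqrt (3+θ) * (n:ℝ)^3 := by
            rw [Real.mul_self_sqrt hn3.le]
    rw [hrpow]
    have hMpos : (0:ℝ) < Real.sqrt M := Real.sqrt_pos.mpr hM0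
    have hNpos : (0:ℝ) < Real.sqrt ((b:ℝ)+M) := Real.sqrt_pos.mpr hbM0
    calc Real.sqrt (θ/2) / (Real.sqrt 2 * Real.sqrt (3+θ)) * (Real.sqrt n / (n:ℝ)^3)
        = (Real.sqrt (θ/2) * Real.sqrt n) / (Real.sqrt 2 * Real.sqrt (3+θ) * (n:ℝ)^3) := by
          field_simp
        _ ≤ Real.sqrt b / (Real.sqrt M * Real.sqrt ((b:ℝ)+M)) := by
          apply div_le_div₀ (Real.sqrt_nonneg _) hbge (by positivity) hprod
  calc min 1 (θ^2) * Real.exp (-(1:ℝ)) * (Real.sqrt (2*Real.pi)/Real.exp 2)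
        * (Real.sqrt (θ/2) / (Real.sqrt 2 * Real.sqrt (3+θ))) * (n:ℝ) ^ (-(5:ℝ)/2)
      = min 1 (θ^2) * Real.exp (-(1:ℝ)) * (Real.sqrt (2*Real.pi)/Real.exp 2
        * (Real.sqrt (θ/2) / (Real.sqrt 2 * Real.sqrt (3+θ)) * (n:ℝ) ^ (-(5:ℝ)/2))) := by ring
    _ ≤ min 1 (θ^2) * Real.exp (-(1:ℝ)) *
        (Real.sqrt (2*Real.pi) / Real.exp 2 * (Real.sqrt b / (Real.sqrt M * Real.sqrt ((b:ℝ)+M)))) := by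
        refine mul_le_mul_of_nonneg_left ?_ (by positivity)
        exact mul_le_mul_of_nonneg_left hfinal (by positivity)
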